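/- Let R = {(z₁, z₂) ∈ ℂ² : (Re z₂)·((Re z₁)² + (Im z₁)²) = (Re z₁)³}. Then: (a) for every c ∈ ℂ with Re c ≠ 0 there is an open neighborhood V of (0, c) in ℂ² with R ∩ V = {z ∈ V : z₁ = 0}; in particular R ∩ V is a complex analytic subset of V; and (b) for every open neighborhood V of the origin, R ∩ V is not a complex analytic subset of V. (Thus R is a real analytic set which is complex analytic only on some part of it.) -/

import Mathlib

open scoped ENNReal

noncomputable section

/-- Germ inclusion `R_p ⊆ Q_p`: `R ∩ V ⊆ Q` for some open neighbourhood `V` of `p`. -/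
def GermLE {E : Type*} [TopologicalSpace E] (R Q : Set E) (p : E) : Prop :=
  ∃ V : Set E, IsOpen V ∧ p ∈ V ∧ R ∩ V ⊆ Q

/-- `R` is a real analytic subset of the open set `Ω`. -/
def IsRealAnalyticSubset {E : Type*} [NormedAddCommGroup E] [NormedSpace ℝ E]
    (Ω R : Set E) : Prop :=
  R ⊆ Ω ∧ ∀ p ∈ Ω, ∃ U : Set E, IsOpen U ∧ p ∈ U ∧ U ⊆ Ω ∧
    ∃ (k : ℕ) (φ : Fin k → E → ℝ),
      (∀ i, AnalyticOnNhd ℝ (φ i) U) ∧ R ∩ U = {x ∈ U | ∀ i, φ i x = 0}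

/-- `X` is a complex analytic subset of the open set `W`. -/
def IsComplexAnalyticSubset {E : Type*} [NormedAddCommGroup E] [NormedSpace ℂ E]
    (W X : Set E) : Prop :=
  X ⊆ W ∧ ∀ p ∈ W, ∃ U : Set E, IsOpen U ∧ p ∈ U ∧ U ⊆ W ∧
    ∃ (k : ℕ) (φ : Fin k → E → ℂ),
      (∀ i, AnalyticOnNhd ℂ (φ i) U) ∧ X ∩ U = {x ∈ U | ∀ i, φ i x = 0}

/-- The local (Hausdorff) dimension of `R` at `p`. -/
def locDim {E : Type*} [EMetricSpace E] (R : Set E) (p : E) : ℝ≥0∞ :=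
  ⨅ (U : Set E) (_ : IsOpen U) (_ : p ∈ U), dimH (R ∩ U)

/-- `X` represents the smallest complex analytic germ at `p` containing the germ of `R`. -/
def IsSmallestComplexGermAt {E : Type*} [NormedAddCommGroup E] [NormedSpace ℂ E]
    (R : Set E) (p : E) (X : Set E) : Prop :=
  (∃ U : Set E, IsOpen U ∧ p ∈ U ∧ IsComplexAnalyticSubset U X) ∧
  GermLE R X p ∧
  ∀ (U' Y : Set E), IsOpen U' → p ∈ U' → IsComplexAnalyticSubset U' Y →
    GermLE R Y p → GermLE X Y p

/-- `S` is closed and nowhere dense in `R` (with its subspace topology). -/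
def ClosedNowhereDenseIn {E : Type*} [TopologicalSpace E] (R S : Set E) : Prop :=
  S ⊆ R ∧ IsClosed {x : R | (x : E) ∈ S} ∧ interior {x : R | (x : E) ∈ S} = ∅

/-- The set `{x₂(x₁² + y₁²) = x₁³} ⊆ ℂ²`. -/
def cartanSet : Set (ℂ × ℂ) :=
  {z | z.2.re * (z.1.re ^ 2 + z.1.im ^ 2) = z.1.re ^ 3}

open Metric Filter Complex Topology

/-- Auxiliary: zeros along a ray accumulate at `t`, giving frequent zeros. -/
lemma freq_aux (t d : ℂ) (ε : ℝ) (hε : 0 < ε) (hd : d ≠ 0) {f : ℂ → ℂ}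
    (h0 : ∀ s : ℝ, 0 < s → s < ε → f (t + d * s) = 0) :
    ∃ᶠ z in 𝓝[≠] t, f z = 0 := by
  have hpos : ∀ n : ℕ, (0:ℝ) < ε / (2 * (n + 1)) := by
    intro n; positivity
  have hlt : ∀ n : ℕ, ε / (2 * (n + 1)) < ε := by
    intro n
    rw [div_lt_iff₀ (by positivity)]
    nlinarith [Nat.cast_nonneg (α := ℝ) n, hε]
  have htend0 : Tendsto (fun n : ℕ => (ε / (2 * (n + 1)) : ℝ)) atTop (𝓝 0) := by
    have h1 : Tendsto (fun n : ℕ => (1:ℝ) / (n + 1)) atTop (𝓝 0) :=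
      tendsto_one_div_add_atTop_nhds_zero_nat
    have := h1.const_mul (ε / 2)
    simpa [div_eq_mul_inv, mul_comm, mul_assoc, mul_left_comm] using this
  have htend : Tendsto (fun n : ℕ => t + d * (ε / (2 * (n + 1)) : ℝ)) atTop (𝓝[≠] t) := by
    apply tendsto_nhdsWithin_of_tendsto_nhds_of_eventually_within
    · have hc : Tendsto (fun n : ℕ => ((ε / (2 * (n + 1)) : ℝ) : ℂ)) atTop (𝓝 0) := by
        have := (Complex.continuous_ofReal.tendsto 0).comp htend0
        exact this
      have := (hc.const_mul d).const_add t
      simpa [Function.comp] using this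
    · filter_upwards with n
      simp only [Set.mem_compl_iff, Set.mem_singleton_iff, add_eq_left]
      intro h
      rcases mul_eq_zero.1 h with h | h
      · exact hd h
      · exact absurd (Complex.ofReal_eq_zero.1 h) (ne_of_gt (hpos n))
  refine htend.frequently (Eventually.frequently ?_)
  filter_upwards with n
  exact h0 _ (hpos n) (hlt n)

/-- Auxiliary: an analytic function on a disc vanishing along a ray vanishes on the disc. -/
lemma vanish_aux {f : ℂ → ℂ} {r : ℝ} (hf : AnalyticOnNhd ℂ f (ball (0:ℂ) r))
    (t d : ℂ) (ht : t ∈ ball (0:ℂ) r) (hd : d ≠ 0) (ε : ℝ) (hε : 0 < ε)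
    (h0 : ∀ s : ℝ, 0 < s → s < ε → f (t + d * s) = 0) :
    Set.EqOn f 0 (ball (0:ℂ) r) :=
  hf.eqOn_zero_of_preconnected_of_frequently_eq_zero (convex_ball (0:ℂ) r).isPreconnected ht
    (freq_aux t d ε hε hd h0)

/-- The set `{x₂(x₁² + y₁²) = x₁³}` is complex analytic near every point
`(0, c)` with `Re c ≠ 0`, but not near the origin. -/
theorem statement13 :
    (∀ c : ℂ, c.re ≠ 0 →
      ∃ V : Set (ℂ × ℂ), IsOpen V ∧ ((0 : ℂ), c) ∈ V ∧
        cartanSet ∩ V = {z ∈ V | z.1 = 0} ∧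
        IsComplexAnalyticSubset V (cartanSet ∩ V)) ∧
    ∀ V : Set (ℂ × ℂ), IsOpen V → (0 : ℂ × ℂ) ∈ V →
      ¬ IsComplexAnalyticSubset V (cartanSet ∩ V) := by
  constructor
  · -- Part (a)
    intro c hc
    set ε : ℝ := |c.re| / 2 with hεdef
    have habs : 0 < |c.re| := abs_pos.2 hc
    have hε : 0 < ε := by positivity
    set V : Set (ℂ × ℂ) := ball ((0:ℂ), c) ε with hVdef
    have key : ∀ z ∈ V, (z ∈ cartanSet ↔ z.1 = 0) := by
      intro z hz
      have hd : dist z ((0:ℂ), c) < ε := mem_ball.1 hz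
      rw [Prod.dist_eq, max_lt_iff] at hd
      have hd1 : ‖z.1‖ < ε := by simpa [dist_eq_norm] using hd.1
      have hd2 : ‖z.2 - c‖ < ε := by simpa [dist_eq_norm] using hd.2
      constructor
      · intro hzc
        set x := z.1.re
        set y := z.1.im
        set A := z.2.re
        have hz' : A * (x ^ 2 + y ^ 2) = x ^ 3 := hzc
        have hx : |x| < ε := lt_of_le_of_lt (Complex.abs_re_le_norm z.1) (by simpa using hd1)
        have hAc : |A - c.re| < ε := by
          have := Complex.abs_re_le_norm (z.2 - c)
          rw [Complex.sub_re] at this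
          exact lt_of_le_of_lt this (by simpa using hd2)
        have hA : ε ≤ |A| := by
          have h1 : |c.re| - |A| ≤ |c.re - A| := abs_sub_abs_le_abs_sub c.re A
          rw [abs_sub_comm] at h1
          have : |c.re| = 2 * ε := by rw [hεdef]; ring
          linarith
        have hA2 : ε ^ 2 ≤ A ^ 2 := by nlinarith [_root_.sq_abs A, abs_nonneg A]
        have hx2 : x ^ 2 < ε ^ 2 := by nlinarith [_root_.sq_abs x, abs_nonneg x]
        have hxy : x ^ 2 + y ^ 2 ≤ 0 := by
          by_contra hcon
          push_neg at hcon
          have heqA : A ^ 2 * ((x ^ 2 + y ^ 2) * (x ^ 2 + y ^ 2)) = x ^ 3 * x ^ 3 := by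
            calc A ^ 2 * ((x ^ 2 + y ^ 2) * (x ^ 2 + y ^ 2))
                = (A * (x ^ 2 + y ^ 2)) * (A * (x ^ 2 + y ^ 2)) := by ring
              _ = x ^ 3 * x ^ 3 := by rw [hz']
          have h1 : x ^ 2 * ((x ^ 2 + y ^ 2) * (x ^ 2 + y ^ 2)) <
              A ^ 2 * ((x ^ 2 + y ^ 2) * (x ^ 2 + y ^ 2)) :=
            mul_lt_mul_of_pos_right (lt_of_lt_of_le hx2 hA2) (mul_pos hcon hcon)
          have h2 : x ^ 3 * x ^ 3 ≤ x ^ 2 * ((x ^ 2 + y ^ 2) * (x ^ 2 + y ^ 2)) := by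
            nlinarith [sq_nonneg (x ^ 2 * y), sq_nonneg (x * y ^ 2), sq_nonneg x, sq_nonneg y]
          linarith
        have hx0 : x = 0 := by nlinarith [sq_nonneg x, sq_nonneg y]
        have hy0 : y = 0 := by nlinarith [sq_nonneg x, sq_nonneg y]
        exact Complex.ext hx0 hy0
      · intro h1
        show z.2.re * (z.1.re ^ 2 + z.1.im ^ 2) = z.1.re ^ 3
        rw [h1]
        simp
    have hRV : cartanSet ∩ V = {z ∈ V | z.1 = 0} := by
      ext z
      constructor
      · rintro ⟨hzc, hzV⟩
        exact ⟨hzV, (key z hzV).1 hzc⟩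
      · rintro ⟨hzV, h1⟩
        exact ⟨(key z hzV).2 h1, hzV⟩
    refine ⟨V, isOpen_ball, mem_ball_self hε, hRV, Set.inter_subset_right, ?_⟩
    intro p hp
    refine ⟨V, isOpen_ball, hp, subset_rfl, 1, fun _ z => z.1, fun i q hq => analyticAt_fst, ?_⟩
    rw [Set.inter_assoc, Set.inter_self, hRV]
    ext z
    simp only [Set.mem_setOf_eq, Fin.forall_fin_one]
  · -- Part (b)
    rintro V hVo h0V ⟨hsub, h⟩
    obtain ⟨U, hUo, h0U, hUV, k, φ, hφ, heq⟩ := h 0 h0V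
    obtain ⟨r, hr, hball⟩ := Metric.isOpen_iff.1 hUo 0 h0U
    -- Points of `cartanSet` in the ball kill all the `φ i`.
    have hzero : ∀ p ∈ ball (0 : ℂ × ℂ) r, p ∈ cartanSet → ∀ i, φ i p = 0 := by
      intro p hp hc i
      have hmem : p ∈ (cartanSet ∩ V) ∩ U := ⟨⟨hc, hUV (hball hp)⟩, hball hp⟩
      rw [heq] at hmem
      exact hmem.2 i
    -- Prod ball membership helper
    have hb : ∀ a w : ℂ, ‖a‖ < r → ‖w‖ < r → ((a, w) : ℂ × ℂ) ∈ ball (0 : ℂ × ℂ) r := by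
      intro a w ha hw
      rw [mem_ball, Prod.dist_eq, max_lt_iff]
      constructor <;> simpa [dist_eq_norm]
    -- Slice analyticity
    have hslice2 : ∀ (i : Fin k) (a : ℂ), ‖a‖ < r →
        AnalyticOnNhd ℂ (fun w => φ i (a, w)) (ball (0:ℂ) r) := by
      intro i a ha w hw
      have hw' : ‖w‖ < r := by simpa [dist_eq_norm] using mem_ball.1 hw
      exact ((hφ i) _ (hball (hb a w ha hw'))).comp (analyticAt_const.prod analyticAt_id)
    have hslice1 : ∀ (i : Fin k) (w : ℂ), ‖w‖ < r →
        AnalyticOnNhd ℂ (fun z => φ i (z, w)) (ball (0:ℂ) r) := by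
      intro i w hw z hz
      have hz' : ‖z‖ < r := by simpa [dist_eq_norm] using mem_ball.1 hz
      exact AnalyticAt.comp (f := fun z' : ℂ => (z', w)) (x := z)
        ((hφ i) (z, w) (hball (hb z w hz' hw))) (analyticAt_id.prod analyticAt_const)
    -- Step 1: φ i (t, w) = 0 for real t with |t| < r and all w in the disc.
    have step1 : ∀ (i : Fin k) (t : ℝ), |t| < r → ∀ w ∈ ball (0:ℂ) r, φ i ((t:ℂ), w) = 0 := by
      intro i t ht w hw
      have htC : ‖(t:ℂ)‖ < r := by simpa [Complex.norm_real, Real.norm_eq_abs] using ht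
      have htball : (t:ℂ) ∈ ball (0:ℂ) r := by simpa [mem_ball, dist_eq_norm] using htC
      have hε : 0 < r - |t| := by linarith
      have h0 : ∀ s : ℝ, 0 < s → s < r - |t| → φ i ((t:ℂ), (t:ℂ) + Complex.I * s) = 0 := by
        intro s hs hs'
        have hnorm : ‖(t:ℂ) + Complex.I * s‖ < r := by
          calc ‖(t:ℂ) + Complex.I * s‖ ≤ ‖(t:ℂ)‖ + ‖Complex.I * (s:ℂ)‖ := norm_add_le _ _
            _ = |t| + |s| := by simp [Complex.norm_real, Real.norm_eq_abs, norm_mul, Complex.norm_I]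
            _ < r := by rw [abs_of_pos hs]; linarith
        have hmem : ((t:ℂ), (t:ℂ) + Complex.I * s) ∈ ball (0 : ℂ × ℂ) r := hb _ _ htC hnorm
        have hcar : ((t:ℂ), (t:ℂ) + Complex.I * s) ∈ cartanSet := by
          show ((t:ℂ) + Complex.I * s).re * (((t:ℂ)).re ^ 2 + ((t:ℂ)).im ^ 2) = ((t:ℂ)).re ^ 3
          simp [Complex.add_re, Complex.mul_re]
          ring
        exact hzero _ hmem hcar i
      exact vanish_aux (fun z hz => hslice2 i (t:ℂ) htC z hz) (t:ℂ) Complex.I htball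
        Complex.I_ne_zero (r - |t|) hε h0 hw
    -- Step 2: φ i vanishes on the whole product of discs.
    have step2 : ∀ (i : Fin k), ∀ z ∈ ball (0:ℂ) r, ∀ w ∈ ball (0:ℂ) r, φ i (z, w) = 0 := by
      intro i z hz w hw
      have hw' : ‖w‖ < r := by simpa [dist_eq_norm] using mem_ball.1 hw
      have h0 : ∀ s : ℝ, 0 < s → s < r → φ i ((0:ℂ) + 1 * s, w) = 0 := by
        intro s hs hs'
        have : |s| < r := by rwa [abs_of_pos hs]
        simpa using step1 i s this w hw
      exact vanish_aux (fun z' hz' => hslice1 i w hw' z' hz') 0 1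
        (mem_ball_self hr) one_ne_zero r hr h0 hz
    -- Contradiction at the point (I·(r/2), r/2).
    set p : ℂ × ℂ := (Complex.I * (r/2 : ℝ), ((r/2 : ℝ) : ℂ)) with hpdef
    have hn1 : ‖Complex.I * ((r/2 : ℝ) : ℂ)‖ < r := by
      rw [norm_mul, Complex.norm_I, one_mul, Complex.norm_real, Real.norm_eq_abs,
        abs_of_pos (by linarith)]
      linarith
    have hn2 : ‖((r/2 : ℝ) : ℂ)‖ < r := by
      rw [Complex.norm_real, Real.norm_eq_abs, abs_of_pos (by linarith)]
      linarith
    have hp1 : (Complex.I * ((r/2 : ℝ) : ℂ)) ∈ ball (0:ℂ) r := by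
      simpa [mem_ball, dist_eq_norm] using hn1
    have hp2 : (((r/2 : ℝ) : ℂ)) ∈ ball (0:ℂ) r := by
      simpa [mem_ball, dist_eq_norm] using hn2
    have hpU : p ∈ U := hball (hb _ _ hn1 hn2)
    have hpzero : ∀ i, φ i p = 0 := fun i => step2 i _ hp1 _ hp2
    have hpmem : p ∈ (cartanSet ∩ V) ∩ U := by
      rw [heq]
      exact ⟨hpU, hpzero⟩
    have hpcar : p ∈ cartanSet := hpmem.1.1
    have : (r/2) * ((0:ℝ) ^ 2 + (r/2) ^ 2) = (0:ℝ) ^ 3 := by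
      have := hpcar
      simp only [cartanSet, Set.mem_setOf_eq, hpdef] at this
      simpa [Complex.mul_re, Complex.mul_im] using this
    nlinarith [this, hr, mul_pos (mul_pos hr hr) hr]

end
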